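/- Let $X_1,\dots,X_n$ be finite subsets of $\mathbb{Z}^d$ and let $i,j$ be adjacent lattice sites such that for each $k$, exactly one of $i,j$ lies in $X_k$. Define $w(X)$ as the minimum cardinality of a set $C$ of nearest-neighbor bonds such that every site of $X$ is an endpoint of some bond in $C$ and $C$ is connected (where two bonds are connected if they share an endpoint or are at distance 1, and a set of bonds is connected if any two bonds are joined by a chain of pairwise-connected bonds in the set). Then $w(X_1 \triangle \cdots \triangle X_n) \le \sum_{k=1}^n w(X_k)$, where $\triangle$ denotes symmetric difference. -/

import Mathlib

open scoped Classical symmDiff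

/-- Sites of the lattice `ℤ^d`. -/
abbrev Site (d : ℕ) := Fin d → ℤ

/-- Two sites are adjacent (nearest neighbors) if their Euclidean distance is `1`. -/
def siteAdj {d : ℕ} (a b : Site d) : Prop := (∑ i, (a i - b i) ^ 2) = 1

/-- A (potential) bond is an ordered pair of sites; genuine bonds have adjacent endpoints. -/
abbrev Bond (d : ℕ) := Site d × Site d

def isBond {d : ℕ} (p : Bond d) : Prop := siteAdj p.1 p.2

/-- Two bonds are connected if they share an endpoint or some of their endpoints
are at distance 1. -/
def bondAdj {d : ℕ} (p q : Bond d) : Prop :=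
  p.1 = q.1 ∨ p.1 = q.2 ∨ p.2 = q.1 ∨ p.2 = q.2 ∨
  siteAdj p.1 q.1 ∨ siteAdj p.1 q.2 ∨ siteAdj p.2 q.1 ∨ siteAdj p.2 q.2

/-- A set of bonds is connected if any two of its bonds are joined by a chain of
pairwise-connected bonds inside the set. -/
def connectedIn {d : ℕ} (C : Finset (Bond d)) : Prop :=
  ∀ p ∈ C, ∀ q ∈ C, Relation.ReflTransGen (fun a b => a ∈ C ∧ b ∈ C ∧ bondAdj a b) p q

/-- `C` covers `X`: every site of `X` is an endpoint of some bond of `C`. -/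
def covers {d : ℕ} (C : Finset (Bond d)) (X : Finset (Site d)) : Prop :=
  ∀ x ∈ X, ∃ p ∈ C, x = p.1 ∨ x = p.2

/-- `w(X)`: minimal cardinality of a connected set of bonds covering `X`. -/
noncomputable def w {d : ℕ} (X : Finset (Site d)) : ℕ∞ :=
  sInf {c : ℕ∞ | ∃ C : Finset (Bond d),
    (∀ p ∈ C, isBond p) ∧ connectedIn C ∧ covers C X ∧ (C.card : ℕ∞) = c}

noncomputable instance {d : ℕ} :
    Std.Commutative (fun X Y : Finset (Site d) => X ∆ Y) := ⟨fun _ _ => symmDiff_comm _ _⟩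

noncomputable instance {d : ℕ} :
    Std.Associative (fun X Y : Finset (Site d) => X ∆ Y) := ⟨symmDiff_assoc⟩

lemma siteAdj_symm {d : ℕ} {a b : Site d} (h : siteAdj a b) : siteAdj b a := by
  unfold siteAdj at *
  rw [← h]
  exact Finset.sum_congr rfl fun i _ => by ring

lemma bondAdj_of_ij {d : ℕ} {i j : Site d} (hij : siteAdj i j) {p q : Bond d}
    (hp : i = p.1 ∨ i = p.2 ∨ j = p.1 ∨ j = p.2)
    (hq : i = q.1 ∨ i = q.2 ∨ j = q.1 ∨ j = q.2) : bondAdj p q := by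
  have hji := siteAdj_symm hij
  rcases hp with hp|hp|hp|hp <;> rcases hq with hq|hq|hq|hq <;>
    simp [bondAdj, ← hp, ← hq, hij, hji]

lemma mem_fold_symmDiff {d : ℕ} {ι : Type*} [DecidableEq ι] (s : Finset ι)
    (f : ι → Finset (Site d)) {x : Site d}
    (hx : x ∈ s.fold (fun A B : Finset (Site d) => A ∆ B) ∅ f) : ∃ k ∈ s, x ∈ f k := by
  induction s using Finset.induction_on with
  | empty => simp [Finset.fold_empty] at hx
  | @insert a s ha ih =>
    rw [Finset.fold_insert ha] at hx
    rcases Finset.mem_symmDiff.mp hx with ⟨h1, _⟩ | ⟨h1, _⟩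
    · exact ⟨a, Finset.mem_insert_self a s, h1⟩
    · obtain ⟨k, hk, hxk⟩ := ih h1
      exact ⟨k, Finset.mem_insert_of_mem hk, hxk⟩

theorem stmt_0 {d n : ℕ} (X : Fin n → Finset (Site d)) (i j : Site d)
    (hij : siteAdj i j)
    (h : ∀ k, (i ∈ X k ∧ j ∉ X k) ∨ (j ∈ X k ∧ i ∉ X k)) :
    w (Finset.univ.fold (fun A B : Finset (Site d) => A ∆ B) ∅ X) ≤ ∑ k, w (X k) := by
  by_cases hfin : ∀ k, w (X k) ≠ ⊤
  · -- choose optimal covers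
    have hne : ∀ k, {c : ℕ∞ | ∃ C : Finset (Bond d),
        (∀ p ∈ C, isBond p) ∧ connectedIn C ∧ covers C (X k) ∧ (C.card : ℕ∞) = c}.Nonempty := by
      intro k
      by_contra hempty
      rw [Set.not_nonempty_iff_eq_empty] at hempty
      exact hfin k (by unfold w; rw [hempty, sInf_empty])
    have hmem : ∀ k, w (X k) ∈ {c : ℕ∞ | ∃ C : Finset (Bond d),
        (∀ p ∈ C, isBond p) ∧ connectedIn C ∧ covers C (X k) ∧ (C.card : ℕ∞) = c} :=
      fun k => csInf_mem (hne k)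
    choose C hbond hconn hcov hcard using hmem
    -- a bond of `C k` touching `i` or `j`
    have hb : ∀ k, ∃ b ∈ C k, i = b.1 ∨ i = b.2 ∨ j = b.1 ∨ j = b.2 := by
      intro k
      rcases h k with ⟨hi, _⟩ | ⟨hj, _⟩
      · obtain ⟨b, hbC, hb⟩ := hcov k i hi
        exact ⟨b, hbC, by tauto⟩
      · obtain ⟨b, hbC, hb⟩ := hcov k j hj
        exact ⟨b, hbC, by tauto⟩
    choose b hbC hbij using hb
    set D : Finset (Bond d) := Finset.univ.biUnion C with hD
    have hsub : ∀ k, C k ⊆ D := fun k =>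
      Finset.subset_biUnion_of_mem C (Finset.mem_univ k)
    have hDbond : ∀ p ∈ D, isBond p := by
      intro p hp
      obtain ⟨k, _, hk⟩ := Finset.mem_biUnion.mp hp
      exact hbond k p hk
    have hlift : ∀ k, ∀ p ∈ C k, ∀ q ∈ C k,
        Relation.ReflTransGen (fun a b => a ∈ D ∧ b ∈ D ∧ bondAdj a b) p q := by
      intro k p hp q hq
      exact Relation.ReflTransGen.mono (by intro a c hac; obtain ⟨h1, h2, h3⟩ := hac; exact ⟨hsub k h1, hsub k h2, h3⟩) _ _ (hconn k p hp q hq)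
    have hDconn : connectedIn D := by
      intro p hp q hq
      obtain ⟨k, _, hk⟩ := Finset.mem_biUnion.mp hp
      obtain ⟨l, _, hl⟩ := Finset.mem_biUnion.mp hq
      exact ((hlift k p hk (b k) (hbC k)).trans
        (Relation.ReflTransGen.single
          ⟨hsub k (hbC k), hsub l (hbC l), bondAdj_of_ij hij (hbij k) (hbij l)⟩)).trans
        (hlift l (b l) (hbC l) q hl)
    have hDcov : covers D (Finset.univ.fold (fun A B : Finset (Site d) => A ∆ B) ∅ X) := by
      intro x hx
      obtain ⟨k, _, hxk⟩ := mem_fold_symmDiff Finset.univ X hx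
      obtain ⟨p, hpC, hp⟩ := hcov k x hxk
      exact ⟨p, hsub k hpC, hp⟩
    have hle : w (Finset.univ.fold (fun A B : Finset (Site d) => A ∆ B) ∅ X)
        ≤ (D.card : ℕ∞) :=
      sInf_le ⟨D, hDbond, hDconn, hDcov, rfl⟩
    refine hle.trans ?_
    calc (D.card : ℕ∞) ≤ ((∑ k, (C k).card : ℕ) : ℕ∞) := by
          exact_mod_cast Finset.card_biUnion_le
      _ = ∑ k, ((C k).card : ℕ∞) := by push_cast; rfl
      _ = ∑ k, w (X k) := Finset.sum_congr rfl fun k _ => hcard k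
  · push_neg at hfin
    obtain ⟨k, hk⟩ := hfin
    have h1 : w (X k) ≤ ∑ k, w (X k) :=
      Finset.single_le_sum (f := fun k => w (X k)) (fun _ _ => zero_le) (Finset.mem_univ k)
    rw [hk] at h1
    exact le_top.trans h1
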